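/- arXiv:0705.0636 — 2 statements merged into one kernel-verified Lean document; each statement's English description precedes it below -/
import Mathlib

section
/- For every p > 1 there exists a constant C_p > 0 such that for all integers N ≥ 2, |∫_0^1 |D_N(x)|^p dx − δ_p N^{p−1}| ≤ C_p · max(N^{p−3}, log N, 1), where δ_p = (2/π) ∫_0^∞ |sin u / u|^p du and D_N(x) = sin(Nπx)/sin(πx) in modulus. -/
open Real MeasureTheory Set

noncomputable def phiP (p : ℝ) (u : ℝ) : ℝ := |Real.sin u / u| ^ p
noncomputable def Gf (p : ℝ) (N : ℕ) (x : ℝ) : ℝ := |Real.sin (N * π * x) / Real.sin (π * x)| ^ p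
noncomputable def Hf (p : ℝ) (N : ℕ) (x : ℝ) : ℝ := |Real.sin (N * π * x) / (π * x)| ^ p
noncomputable def maxE (p : ℝ) (N : ℕ) : ℝ := max (max ((N:ℝ)^(p-3)) (Real.log N)) 1

lemma rpow_diff_le {p a b B : ℝ} (hp : 1 ≤ p) (hb : 0 ≤ b) (hba : b ≤ a) (haB : a ≤ B) :
    a ^ p - b ^ p ≤ p * B ^ (p - 1) * (a - b) := by
  have ha : 0 ≤ a := hb.trans hba
  rcases eq_or_lt_of_le hba with h | h
  · subst h; simp
  · have hcont : ∀ x ∈ Set.Icc b a, ContinuousAt (fun y : ℝ => y ^ p) x := fun x _ =>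
      (Real.hasDerivAt_rpow_const (Or.inr hp)).continuousAt
    obtain ⟨c, hc, hc'⟩ := exists_hasDerivAt_eq_slope (fun y : ℝ => y ^ p)
      (fun y : ℝ => p * y ^ (p - 1)) h
      (continuousOn_of_forall_continuousAt hcont)
      (fun x _ => Real.hasDerivAt_rpow_const (Or.inr hp))
    have hcB : c ^ (p - 1) ≤ B ^ (p - 1) :=
      Real.rpow_le_rpow (hb.trans hc.1.le) (hc.2.le.trans haB) (by linarith)
    rw [eq_div_iff (ne_of_gt (sub_pos.2 h))] at hc'
    rw [← hc']
    have hpos : (0:ℝ) ≤ a - b := by linarith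
    have hp0 : (0:ℝ) ≤ p := by linarith
    exact mul_le_mul_of_nonneg_right (mul_le_mul_of_nonneg_left hcB hp0) hpos

lemma abs_sin_nat_mul_le (N : ℕ) (t : ℝ) (ht : 0 ≤ Real.sin t) :
    |Real.sin (N * t)| ≤ N * Real.sin t := by
  induction N with
  | zero => simp
  | succ k ih =>
    have h1 : (((k:ℕ)+1:ℕ):ℝ) * t = (k:ℝ)*t + t := by push_cast; ring
    rw [h1, Real.sin_add]
    have h2 : |Real.sin ((k:ℝ)*t) * Real.cos t + Real.cos ((k:ℝ)*t) * Real.sin t|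
        ≤ |Real.sin ((k:ℝ)*t)| * |Real.cos t| + |Real.cos ((k:ℝ)*t)| * |Real.sin t| := by
      calc _ ≤ |Real.sin ((k:ℝ)*t) * Real.cos t| + |Real.cos ((k:ℝ)*t) * Real.sin t| := abs_add_le _ _
        _ = _ := by rw [abs_mul, abs_mul]
    have h3 : |Real.sin ((k:ℝ)*t)| * |Real.cos t| ≤ |Real.sin ((k:ℝ)*t)| * 1 :=
      mul_le_mul_of_nonneg_left (Real.abs_cos_le_one t) (abs_nonneg _)
    have h4 : |Real.cos ((k:ℝ)*t)| * |Real.sin t| ≤ 1 * Real.sin t := by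
      rw [abs_of_nonneg ht]
      exact mul_le_mul_of_nonneg_right (Real.abs_cos_le_one _) ht
    have h5 : |Real.sin ((k:ℝ)*t)| ≤ (k:ℝ) * Real.sin t := ih
    push_cast
    nlinarith [abs_nonneg (Real.sin ((k:ℝ)*t))]

lemma abs_exp_I_sub_one (θ : ℝ) :
    ‖Complex.exp (θ * Complex.I) - 1‖ = 2 * |Real.sin (θ / 2)| := by
  have h : Complex.exp (θ * Complex.I) - 1
      = (Complex.ofReal (Real.cos θ - 1)) + (Complex.ofReal (Real.sin θ)) * Complex.I := by
    rw [Complex.exp_mul_I, ← Complex.ofReal_cos, ← Complex.ofReal_sin]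
    push_cast; ring
  rw [h, Complex.norm_add_mul_I]
  have h4 := Real.cos_sq (θ/2)
  rw [show 2*(θ/2) = θ by ring] at h4
  have h3 := Real.sin_sq_add_cos_sq (θ/2)
  have hsθ : Real.sin θ = 2 * Real.sin (θ/2) * Real.cos (θ/2) := by
    rw [← Real.sin_two_mul]; congr 1; ring
  have h2 : (Real.cos θ - 1)^2 + (Real.sin θ)^2 = (2 * |Real.sin (θ/2)|)^2 := by
    rw [hsθ]
    nlinarith [sq_abs (Real.sin (θ/2)), abs_nonneg (Real.sin (θ/2))]
  rw [h2, Real.sqrt_sq (by positivity)]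

lemma kernel_abs (N : ℕ) (x : ℝ) (hx0 : 0 < x) (hx1 : x < 1) :
    ‖∑ ν ∈ Finset.range N, Complex.exp (2 * Real.pi * Complex.I * ν * x)‖
      = |Real.sin (N * π * x) / Real.sin (π * x)| := by
  set z : ℂ := Complex.exp (2 * Real.pi * Complex.I * x) with hz
  have hterm : ∀ ν : ℕ, Complex.exp (2 * Real.pi * Complex.I * ν * x) = z ^ ν := by
    intro ν
    rw [hz, ← Complex.exp_nat_mul]
    ring_nf
  have hzne : z ≠ 1 := by
    rw [hz]
    intro hcon
    rw [Complex.exp_eq_one_iff] at hcon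
    obtain ⟨n, hn⟩ := hcon
    have h2 : ((2*π*x : ℝ):ℂ)*Complex.I = (((n:ℝ)*(2*π) : ℝ):ℂ)*Complex.I := by
      push_cast
      linear_combination hn
    have h3 : ((2*π*x : ℝ):ℂ) = (((n:ℝ)*(2*π) : ℝ):ℂ) :=
      mul_right_cancel₀ Complex.I_ne_zero h2
    have h4 : 2*π*x = (n:ℝ)*(2*π) := by exact_mod_cast h3
    have hπ := Real.pi_pos
    have hx : x = (n : ℝ) := by
      have h5 : 2*π*(x - (n:ℝ)) = 0 := by linarith
      have h6 : x - (n:ℝ) = 0 := by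
        rcases mul_eq_zero.1 h5 with h | h
        · nlinarith
        · exact h
      linarith
    rcases le_or_gt n 0 with h | h
    · have : (n:ℝ) ≤ 0 := by exact_mod_cast h
      linarith
    · have : (1:ℝ) ≤ (n:ℝ) := by exact_mod_cast h
      linarith
  rw [Finset.sum_congr rfl (fun ν _ => hterm ν), geom_sum_eq hzne, norm_div]
  have hzN : z ^ N = Complex.exp (((2 * π * N * x : ℝ) : ℂ) * Complex.I) := by
    rw [hz, ← Complex.exp_nat_mul]; push_cast; ring_nf
  have hz1 : z = Complex.exp (((2 * π * x : ℝ) : ℂ) * Complex.I) := by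
    rw [hz]; push_cast; ring_nf
  rw [hzN, hz1, abs_exp_I_sub_one, abs_exp_I_sub_one]
  have e1 : 2 * π * N * x / 2 = N * π * x := by ring
  have e2 : 2 * π * x / 2 = π * x := by ring
  rw [e1, e2, abs_div]
  have hs : (0:ℝ) < Real.sin (π * x) := Real.sin_pos_of_pos_of_lt_pi (by positivity)
    (by nlinarith [Real.pi_pos])
  rw [mul_div_mul_left _ _ (two_ne_zero)]

lemma Gf_nonneg (p : ℝ) (N : ℕ) (x : ℝ) : 0 ≤ Gf p N x := Real.rpow_nonneg (abs_nonneg _) _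

lemma Hf_nonneg (p : ℝ) (N : ℕ) (x : ℝ) : 0 ≤ Hf p N x := Real.rpow_nonneg (abs_nonneg _) _

lemma phiP_nonneg (p : ℝ) (u : ℝ) : 0 ≤ phiP p u := Real.rpow_nonneg (abs_nonneg _) _

lemma sin_pi_mul_pos {x : ℝ} (hx0 : 0 < x) (hx1 : x < 1) : 0 < Real.sin (π * x) :=
  Real.sin_pos_of_pos_of_lt_pi (by positivity) (by nlinarith [Real.pi_pos])

lemma ratio_le_N {N : ℕ} {x : ℝ} (hx0 : 0 < x) (hx1 : x < 1) :
    |Real.sin (N * π * x)| / Real.sin (π * x) ≤ N := by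
  have hs := sin_pi_mul_pos hx0 hx1
  rw [div_le_iff₀ hs]
  have := abs_sin_nat_mul_le N (π * x) hs.le
  rw [show (N:ℝ) * (π * x) = N * π * x by ring] at this
  exact this

lemma Gf_abs_eq {N : ℕ} {x : ℝ} (hx0 : 0 < x) (hx1 : x < 1) (p : ℝ) :
    Gf p N x = (|Real.sin (N * π * x)| / Real.sin (π * x)) ^ p := by
  unfold Gf
  rw [abs_div, abs_of_pos (sin_pi_mul_pos hx0 hx1)]

lemma Hf_abs_eq {N : ℕ} {x : ℝ} (hx0 : 0 < x) (p : ℝ) :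
    Hf p N x = (|Real.sin (N * π * x)| / (π * x)) ^ p := by
  unfold Hf
  rw [abs_div, abs_of_pos (show (0:ℝ) < π * x by positivity)]

lemma Gf_le_rpow {p : ℝ} (hp : 0 ≤ p) {N : ℕ} {x : ℝ} (hx0 : 0 < x) (hx1 : x < 1) :
    Gf p N x ≤ (N:ℝ) ^ p := by
  rw [Gf_abs_eq hx0 hx1]
  exact Real.rpow_le_rpow (div_nonneg (abs_nonneg _) (sin_pi_mul_pos hx0 hx1).le)
    (ratio_le_N hx0 hx1) hp

lemma Hf_le_Gf {p : ℝ} (hp : 0 ≤ p) {N : ℕ} {x : ℝ} (hx0 : 0 < x) (hx1 : x < 1) :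
    Hf p N x ≤ Gf p N x := by
  rw [Gf_abs_eq hx0 hx1, Hf_abs_eq hx0]
  have hs := sin_pi_mul_pos hx0 hx1
  have hst : Real.sin (π * x) ≤ π * x := Real.sin_le (by positivity)
  exact Real.rpow_le_rpow (div_nonneg (abs_nonneg _) (by positivity)) (by gcongr) hp

lemma diff_bound {p : ℝ} (hp : 1 ≤ p) {N : ℕ} {x : ℝ} (hx0 : 0 < x) (hx2 : x ≤ 1/2)
    {A M : ℝ} (hA : |Real.sin (N * π * x)| / Real.sin (π * x) ≤ A)
    (hM : |Real.sin (N * π * x)| ≤ M) :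
    Gf p N x - Hf p N x ≤ p * A ^ (p - 1) * (M * (π^2/2 * x)) := by
  have hπ := Real.pi_pos
  have hx1 : x < 1 := by linarith
  set t := π * x with htdef
  set s := Real.sin (π * x) with hsdef
  set m := |Real.sin (N * π * x)| with hmdef
  have ht0 : 0 < t := by positivity
  have htπ2 : t ≤ π/2 := by rw [htdef]; nlinarith
  have hs0 : 0 < s := sin_pi_mul_pos hx0 hx1
  have hst : s ≤ t := Real.sin_le ht0.le
  have hs2 : 2/π * t ≤ s := Real.mul_le_sin ht0.le htπ2
  have hm0 : 0 ≤ m := abs_nonneg _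
  have hts : t - s ≤ t^3 := by
    rcases le_or_gt t 1 with h | h
    · have := Real.sin_gt_sub_cube ht0
      nlinarith
    · have hsnn : 0 ≤ s := hs0.le
      nlinarith [mul_nonneg (mul_nonneg ht0.le (by linarith : (0:ℝ) ≤ t-1)) (by linarith : (0:ℝ) ≤ t+1)]
  rw [Gf_abs_eq hx0 hx1, Hf_abs_eq hx0, ← hsdef, ← htdef, ← hmdef]
  have hba : m/t ≤ m/s := by gcongr
  have haA : m/s ≤ A := hA
  have key := rpow_diff_le hp (by positivity : (0:ℝ) ≤ m/t) hba haA
  have hdiff : m/s - m/t ≤ M * (π^2/2 * x) := by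
    have he : m/s - m/t = m * ((t - s)/(s*t)) := by field_simp
    have hb1 : (t - s)/(s*t) ≤ π/2 * t := by
      have hden : 2/π * t * t ≤ s * t := by nlinarith
      calc (t - s)/(s*t) ≤ t^3 / (2/π * t * t) := by
            apply div_le_div₀ (by positivity) hts (by positivity) hden
        _ = π/2 * t := by field_simp
    have hb2 : 0 ≤ (t - s)/(s*t) := div_nonneg (by linarith) (by positivity)
    calc m/s - m/t = m * ((t - s)/(s*t)) := he
      _ ≤ M * (π/2 * t) := mul_le_mul hM hb1 hb2 (hm0.trans hM)
      _ = M * (π^2/2 * x) := by rw [htdef]; ring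
  have hApos : 0 ≤ A := le_trans (by positivity) haA
  calc (m/s)^p - (m/t)^p ≤ p * A^(p-1) * (m/s - m/t) := key
    _ ≤ p * A^(p-1) * (M * (π^2/2 * x)) := by
        apply mul_le_mul_of_nonneg_left hdiff
        positivity

lemma Gf_symm (p : ℝ) (N : ℕ) (x : ℝ) : Gf p N (1 - x) = Gf p N x := by
  unfold Gf
  have h1 : π * (1 - x) = π - π * x := by ring
  have h2 : (N:ℝ) * π * (1 - x) = N * π - N * π * x := by ring
  rw [h1, h2, Real.sin_pi_sub]
  have h3 : Real.sin ((N:ℝ) * π) = 0 := by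
    have := Real.sin_nat_mul_pi N
    rwa [show (N:ℝ) * π = ↑N * π from rfl]
  have h4 : |Real.cos ((N:ℝ) * π)| = 1 := by
    have h5 := Real.sin_sq_add_cos_sq ((N:ℝ) * π)
    rw [h3] at h5
    nlinarith [abs_nonneg (Real.cos ((N:ℝ)*π)), sq_abs (Real.cos ((N:ℝ)*π))]
  have h6 : |Real.sin ((N:ℝ) * π - N * π * x)| = |Real.sin ((N:ℝ) * π * x)| := by
    rw [Real.sin_sub, h3, zero_mul, zero_sub, abs_neg, abs_mul, h4, one_mul]
  rw [abs_div, abs_div, h6]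

lemma meas_Gf {p : ℝ} (hp : 0 ≤ p) (N : ℕ) : Measurable (Gf p N) := by
  apply (Real.continuous_rpow_const hp).measurable.comp
  exact ((Real.continuous_sin.comp (continuous_const.mul continuous_id)).measurable.div
    (Real.continuous_sin.comp (continuous_const.mul continuous_id)).measurable).abs

lemma meas_Hf {p : ℝ} (hp : 0 ≤ p) (N : ℕ) : Measurable (Hf p N) := by
  apply (Real.continuous_rpow_const hp).measurable.comp
  exact ((Real.continuous_sin.comp (continuous_const.mul continuous_id)).measurable.div
    ((continuous_const.mul continuous_id).measurable)).abs

lemma meas_phiP {p : ℝ} (hp : 0 ≤ p) : Measurable (phiP p) := by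
  apply (Real.continuous_rpow_const hp).measurable.comp
  exact (Real.continuous_sin.measurable.div measurable_id).abs

lemma Gf_one (p : ℝ) (N : ℕ) : Gf p N 1 = 0 ^ p := by
  unfold Gf
  rw [mul_one, mul_one, Real.sin_pi, div_zero, abs_zero]

lemma integrableOn_Gf {p : ℝ} (hp : 1 ≤ p) (N : ℕ) :
    IntegrableOn (Gf p N) (Ioc (0:ℝ) 1) := by
  have hp0 : (0:ℝ) ≤ p := by linarith
  apply Measure.integrableOn_of_bounded (M := (N:ℝ)^p) measure_Ioc_lt_top.ne
    ((meas_Gf hp0 N).aestronglyMeasurable)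
  rw [ae_restrict_iff' measurableSet_Ioc]
  filter_upwards with x hx
  rw [Real.norm_eq_abs, abs_of_nonneg (Gf_nonneg p N x)]
  rcases eq_or_lt_of_le hx.2 with h | h
  · rw [h, Gf_one, Real.zero_rpow (by linarith)]
    positivity
  · exact Gf_le_rpow hp0 hx.1 h

lemma Hf_one (p : ℝ) (N : ℕ) : Hf p N 1 = 0 ^ p := by
  unfold Hf
  rw [mul_one, mul_one, Real.sin_nat_mul_pi, zero_div, abs_zero]

lemma integrableOn_Hf {p : ℝ} (hp : 1 ≤ p) (N : ℕ) :
    IntegrableOn (Hf p N) (Ioc (0:ℝ) 1) := by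
  have hp0 : (0:ℝ) ≤ p := by linarith
  apply Measure.integrableOn_of_bounded (M := (N:ℝ)^p) measure_Ioc_lt_top.ne
    ((meas_Hf hp0 N).aestronglyMeasurable)
  rw [ae_restrict_iff' measurableSet_Ioc]
  filter_upwards with x hx
  rw [Real.norm_eq_abs, abs_of_nonneg (Hf_nonneg p N x)]
  rcases eq_or_lt_of_le hx.2 with h | h
  · rw [h, Hf_one, Real.zero_rpow (by linarith)]
    positivity
  · exact (Hf_le_Gf hp0 hx.1 h).trans (Gf_le_rpow hp0 hx.1 h)

lemma phiP_le_one {p : ℝ} (hp : 0 ≤ p) (u : ℝ) : phiP p u ≤ 1 := by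
  unfold phiP
  rcases eq_or_ne u 0 with h | h
  · rw [h, div_zero, abs_zero]
    exact Real.rpow_le_one le_rfl zero_le_one hp
  · apply Real.rpow_le_one (abs_nonneg _) _ hp
    rw [abs_div, div_le_one (abs_pos.2 h)]
    exact Real.abs_sin_le_abs

lemma phiP_le_rpow {p : ℝ} (hp : 0 ≤ p) {u : ℝ} (hu : 0 < u) : phiP p u ≤ u ^ (-p) := by
  unfold phiP
  rw [Real.rpow_neg hu.le, ← Real.inv_rpow hu.le]
  apply Real.rpow_le_rpow (abs_nonneg _) _ hp
  rw [abs_div, abs_of_pos hu, div_le_iff₀ hu, inv_mul_cancel₀ hu.ne']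
  exact Real.abs_sin_le_one u

lemma integrableOn_phiP {p : ℝ} (hp : 1 < p) : IntegrableOn (phiP p) (Ioi (0:ℝ)) := by
  have hp0 : (0:ℝ) ≤ p := by linarith
  have h1 : IntegrableOn (phiP p) (Ioc (0:ℝ) 1) := by
    apply Measure.integrableOn_of_bounded (M := (1:ℝ)) measure_Ioc_lt_top.ne
      ((meas_phiP hp0).aestronglyMeasurable)
    filter_upwards with x
    rw [Real.norm_eq_abs, abs_of_nonneg (phiP_nonneg p x)]
    exact phiP_le_one hp0 x
  have h2 : IntegrableOn (phiP p) (Ioi (1:ℝ)) := by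
    apply Integrable.mono (integrableOn_Ioi_rpow_of_lt (by linarith : -p < -1) zero_lt_one)
      ((meas_phiP hp0).aestronglyMeasurable)
    rw [ae_restrict_iff' measurableSet_Ioi]
    filter_upwards with u hu
    rw [Real.norm_eq_abs, Real.norm_eq_abs, abs_of_nonneg (phiP_nonneg p u),
      abs_of_nonneg (Real.rpow_nonneg (by linarith [mem_Ioi.1 hu] : (0:ℝ) ≤ u) _)]
    exact phiP_le_rpow hp0 (by linarith [mem_Ioi.1 hu])
  rw [← Ioc_union_Ioi_eq_Ioi (zero_le_one : (0:ℝ) ≤ 1)]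
  exact h1.union h2

lemma tail_split {p : ℝ} (hp : 1 < p) {T : ℝ} (hT : 0 < T) :
    (∫ u in Ioi (0:ℝ), phiP p u) - (∫ u in Ioc (0:ℝ) T, phiP p u)
      = ∫ u in Ioi T, phiP p u := by
  have hint := integrableOn_phiP hp
  have hu : Ioc (0:ℝ) T ∪ Ioi T = Ioi (0:ℝ) := Ioc_union_Ioi_eq_Ioi hT.le
  have h1 : IntegrableOn (phiP p) (Ioc (0:ℝ) T) := hint.mono_set (by rw [← hu]; exact subset_union_left)
  have h2 : IntegrableOn (phiP p) (Ioi T) := hint.mono_set (by rw [← hu]; exact subset_union_right)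
  rw [← hu, setIntegral_union (Ioc_disjoint_Ioi le_rfl) measurableSet_Ioi h1 h2]
  ring

lemma tail_le {p : ℝ} (hp : 1 < p) {T : ℝ} (hT : 0 < T) :
    ∫ u in Ioi T, phiP p u ≤ T ^ (1 - p) / (p - 1) := by
  have h2 : IntegrableOn (phiP p) (Ioi T) :=
    (integrableOn_phiP hp).mono_set (Ioi_subset_Ioi hT.le)
  have h3 : IntegrableOn (fun u : ℝ => u ^ (-p)) (Ioi T) :=
    integrableOn_Ioi_rpow_of_lt (by linarith) hT
  calc ∫ u in Ioi T, phiP p u ≤ ∫ u in Ioi T, u ^ (-p) := by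
        apply setIntegral_mono_on h2 h3 measurableSet_Ioi
        intro u hu
        exact phiP_le_rpow (by linarith) (hT.trans (mem_Ioi.1 hu))
    _ = -T ^ (-p + 1) / (-p + 1) := integral_Ioi_rpow_of_lt (by linarith) hT
    _ = T ^ (1 - p) / (p - 1) := by
        rw [show -p + 1 = 1 - p by ring]
        have h1p : p - 1 ≠ 0 := by linarith
        rw [div_eq_div_iff (by linarith : (1:ℝ) - p ≠ 0) (by linarith : (p:ℝ) - 1 ≠ 0)]
        ring

lemma tail_nonneg {p : ℝ} {T : ℝ} : 0 ≤ ∫ u in Ioi T, phiP p u :=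
  setIntegral_nonneg measurableSet_Ioi (fun u _ => phiP_nonneg p u)

lemma Hf_eq_phiP {p : ℝ} (hp : p ≠ 0) {N : ℕ} (hN : 1 ≤ N) (x : ℝ) :
    Hf p N x = (N:ℝ) ^ p * phiP p ((N * π) * x) := by
  have hN0 : (0:ℝ) < N := by exact_mod_cast hN
  rcases eq_or_ne x 0 with h | h
  · simp [Hf, phiP, h, Real.zero_rpow hp]
  · unfold Hf phiP
    have harg : (N:ℝ) * π * x = (N * π) * x := by ring
    have he : Real.sin (N * π * x) / (π * x) = N * (Real.sin ((N*π)*x) / ((N*π)*x)) := by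
      rw [← harg]
      field_simp
    rw [he, abs_mul, abs_of_pos hN0,
      Real.mul_rpow hN0.le (abs_nonneg _)]

lemma Hf_integral_eq {p : ℝ} (hp : 1 < p) {N : ℕ} (hN : 1 ≤ N) :
    ∫ x in (0:ℝ)..(1/2:ℝ), Hf p N x
      = (N:ℝ) ^ (p - 1) * π⁻¹ * ∫ u in (0:ℝ)..((N:ℝ)*π/2), phiP p u := by
  have hN0 : (0:ℝ) < N := by exact_mod_cast hN
  have hπ := Real.pi_pos
  have hc : ((N:ℝ) * π) ≠ 0 := by positivity
  have h1 : ∀ x, Hf p N x = (N:ℝ) ^ p * phiP p ((N * π) * x) :=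
    Hf_eq_phiP (by linarith) hN
  rw [intervalIntegral.integral_congr (fun x _ => h1 x)]
  rw [intervalIntegral.integral_const_mul]
  rw [intervalIntegral.integral_comp_mul_left (phiP p) hc]
  rw [mul_zero, show (N:ℝ) * π * (1/2) = (N:ℝ)*π/2 by ring, smul_eq_mul]
  rw [← mul_assoc]
  congr 1
  rw [mul_inv, ← mul_assoc]
  congr 1
  rw [Real.rpow_sub hN0, Real.rpow_one]
  rfl

lemma maxE_pos (p : ℝ) (N : ℕ) : 0 < maxE p N := lt_of_lt_of_le one_pos (le_max_right _ _)

lemma one_le_maxE (p : ℝ) (N : ℕ) : 1 ≤ maxE p N := le_max_right _ _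

lemma rpow_le_maxE (p : ℝ) (N : ℕ) : (N:ℝ)^(p-3) ≤ maxE p N :=
  (le_max_left _ _).trans (le_max_left _ _)

lemma log_le_maxE (p : ℝ) (N : ℕ) : Real.log N ≤ maxE p N :=
  (le_max_right _ _).trans (le_max_left _ _)

lemma two_le_Npi {N : ℕ} (hN : 2 ≤ N) : (2:ℝ) ≤ (N:ℝ)*π := by
  have h2 : (2:ℝ) ≤ (N:ℝ) := by exact_mod_cast hN
  nlinarith [Real.pi_gt_three]

lemma inv_Npi_le_half {N : ℕ} (hN : 2 ≤ N) : ((N:ℝ)*π)⁻¹ ≤ 1/2 := by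
  rw [one_div]
  exact inv_anti₀ two_pos (two_le_Npi hN)

lemma region2_integral {p : ℝ} (hp : 1 < p) :
    ∃ D > 0, ∀ N : ℕ, 2 ≤ N →
      ∫ x in (((N:ℝ)*π)⁻¹)..(1/2:ℝ), x^(2-p) ≤ D * maxE p N := by
  have hπ := Real.pi_pos
  rcases lt_trichotomy p 3 with h3 | h3 | h3
  · refine ⟨1/(3-p), div_pos one_pos (by linarith), fun N hN => ?_⟩
    have hN0 : (0:ℝ) < N := by exact_mod_cast Nat.lt_of_lt_of_le two_pos hN
    have ha0 : (0:ℝ) < ((N:ℝ)*π)⁻¹ := by positivity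
    rw [integral_rpow (Or.inl (by linarith : (-1:ℝ) < 2 - p))]
    rw [show (2:ℝ) - p + 1 = 3 - p by ring]
    have h1 : ((1:ℝ)/2) ^ (3-p) ≤ 1 :=
      Real.rpow_le_one (by norm_num) (by norm_num) (by linarith)
    have h2 : (0:ℝ) ≤ (((N:ℝ)*π)⁻¹) ^ (3-p) := Real.rpow_nonneg ha0.le _
    calc (((1:ℝ)/2) ^ (3-p) - (((N:ℝ)*π)⁻¹) ^ (3-p)) / (3 - p) ≤ 1 / (3-p) := by
          gcongr
          · linarith
      _ ≤ 1/(3-p) * maxE p N := by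
          nth_rewrite 1 [← mul_one (1/(3-p))]
          exact mul_le_mul_of_nonneg_left (one_le_maxE p N) (le_of_lt (div_pos one_pos (by linarith)))
  · subst h3
    refine ⟨2, by norm_num, fun N hN => ?_⟩
    have hN0 : (0:ℝ) < N := by exact_mod_cast Nat.lt_of_lt_of_le two_pos hN
    have ha0 : (0:ℝ) < ((N:ℝ)*π)⁻¹ := by positivity
    have ha2 : ((N:ℝ)*π)⁻¹ ≤ 1/2 := inv_Npi_le_half hN
    have hcong : ∀ x ∈ Set.uIcc (((N:ℝ)*π)⁻¹) (1/2:ℝ), x ^ (2-(3:ℝ)) = x⁻¹ := by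
      intro x hx
      rw [show (2:ℝ)-3 = -1 by norm_num, Real.rpow_neg_one]
    rw [intervalIntegral.integral_congr hcong]
    rw [integral_inv (by
      rw [Set.uIcc_of_le ha2]
      rintro ⟨hm1, hm2⟩
      exact absurd hm1 (not_le.2 ha0))]
    rw [show (1:ℝ)/2 / ((N:ℝ)*π)⁻¹ = (N:ℝ)*(π/2) by field_simp]
    rw [Real.log_mul (by positivity) (by positivity)]
    have h5 : Real.log (π/2) ≤ 1 := by
      have := Real.log_le_sub_one_of_pos (by positivity : (0:ℝ) < π/2)
      nlinarith [Real.pi_lt_d2]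
    have h6 : Real.log N ≤ maxE 3 N := log_le_maxE 3 N
    have h7 : (1:ℝ) ≤ maxE 3 N := one_le_maxE 3 N
    linarith
  · refine ⟨π^(p-3)/(p-3), div_pos (Real.rpow_pos_of_pos hπ _) (by linarith), fun N hN => ?_⟩
    have hN0 : (0:ℝ) < N := by exact_mod_cast Nat.lt_of_lt_of_le two_pos hN
    have ha0 : (0:ℝ) < ((N:ℝ)*π)⁻¹ := by positivity
    have ha2 : ((N:ℝ)*π)⁻¹ ≤ 1/2 := inv_Npi_le_half hN
    rw [integral_rpow (Or.inr ⟨by intro h; linarith [h, (by linarith : (2:ℝ)-p < -1)], by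
      rw [Set.uIcc_of_le ha2]
      rintro ⟨hm1, hm2⟩
      exact absurd hm1 (not_le.2 ha0)⟩)]
    rw [show (2:ℝ) - p + 1 = 3 - p by ring]
    have hB : (((N:ℝ)*π)⁻¹) ^ (3-p) = (N:ℝ)^(p-3) * π^(p-3) := by
      rw [Real.inv_rpow (by positivity), ← Real.rpow_neg (by positivity),
        show -((3:ℝ)-p) = p - 3 by ring, Real.mul_rpow hN0.le hπ.le]
    have h1 : (0:ℝ) ≤ ((1:ℝ)/2) ^ (3-p) := Real.rpow_nonneg (by norm_num) _
    have hkey : (((1:ℝ)/2) ^ (3-p) - (((N:ℝ)*π)⁻¹) ^ (3-p)) / (3 - p)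
        = ((((N:ℝ)*π)⁻¹) ^ (3-p) - ((1:ℝ)/2) ^ (3-p)) / (p - 3) := by
      rw [show (3:ℝ)-p = -(p-3) by ring, div_neg, ← neg_div, neg_sub]
    rw [hkey, hB]
    calc ((N:ℝ)^(p-3) * π^(p-3) - ((1:ℝ)/2) ^ (3-p)) / (p - 3)
        ≤ ((N:ℝ)^(p-3) * π^(p-3)) / (p - 3) := by gcongr <;> linarith
      _ = π^(p-3)/(p-3) * (N:ℝ)^(p-3) := by ring
      _ ≤ π^(p-3)/(p-3) * maxE p N := by
          exact mul_le_mul_of_nonneg_left (rpow_le_maxE p N)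
            (le_of_lt (div_pos (Real.rpow_pos_of_pos hπ _) (by linarith)))

lemma Gf_zero (p : ℝ) (hp : p ≠ 0) (N : ℕ) : Gf p N 0 = 0 := by
  simp [Gf, Real.zero_rpow hp]

lemma Hf_zero (p : ℝ) (hp : p ≠ 0) (N : ℕ) : Hf p N 0 = 0 := by
  simp [Hf, Real.zero_rpow hp]

lemma E1_bound {p : ℝ} (hp : 1 < p) :
    ∃ C1 > 0, ∀ N : ℕ, 2 ≤ N →
      ∫ x in (0:ℝ)..(1/2:ℝ), (Gf p N x - Hf p N x)
        ≤ C1 * maxE p N := by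
  have hπ := Real.pi_pos
  have hp1 : (1:ℝ) ≤ p := hp.le
  have hp0 : p ≠ 0 := by linarith
  obtain ⟨D, hD, hDbd⟩ := region2_integral hp
  set c2 : ℝ := p*(π^2/2)*(2:ℝ)^(1-p) with hc2
  have hc2pos : 0 < c2 := by
    have := Real.rpow_pos_of_pos (two_pos : (0:ℝ) < 2) (1-p)
    positivity
  refine ⟨p/6 + c2 * D, by positivity, fun N hN => ?_⟩
  have hN0 : (0:ℝ) < N := by exact_mod_cast Nat.lt_of_lt_of_le two_pos hN
  set a : ℝ := ((N:ℝ)*π)⁻¹ with hadef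
  have ha0 : 0 < a := by positivity
  have ha2 : a ≤ 1/2 := inv_Npi_le_half hN
  -- integrability
  have hsub1 : Ioc (0:ℝ) a ⊆ Ioc 0 1 := Ioc_subset_Ioc le_rfl (by linarith)
  have hsub2 : Ioc a (1/2:ℝ) ⊆ Ioc 0 1 := Ioc_subset_Ioc ha0.le (by norm_num)
  have hG1 : IntervalIntegrable (Gf p N) volume 0 a :=
    (intervalIntegrable_iff_integrableOn_Ioc_of_le ha0.le).2
      ((integrableOn_Gf hp1 N).mono_set hsub1)
  have hG2 : IntervalIntegrable (Gf p N) volume a (1/2) :=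
    (intervalIntegrable_iff_integrableOn_Ioc_of_le ha2).2
      ((integrableOn_Gf hp1 N).mono_set hsub2)
  have hH1 : IntervalIntegrable (Hf p N) volume 0 a :=
    (intervalIntegrable_iff_integrableOn_Ioc_of_le ha0.le).2
      ((integrableOn_Hf hp1 N).mono_set hsub1)
  have hH2 : IntervalIntegrable (Hf p N) volume a (1/2) :=
    (intervalIntegrable_iff_integrableOn_Ioc_of_le ha2).2
      ((integrableOn_Hf hp1 N).mono_set hsub2)
  have hD1 := hG1.sub hH1
  have hD2 := hG2.sub hH2
  -- split
  have hsplit : ∫ x in (0:ℝ)..(1/2:ℝ), (Gf p N x - Hf p N x)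
      = (∫ x in (0:ℝ)..a, (Gf p N x - Hf p N x))
        + ∫ x in a..(1/2:ℝ), (Gf p N x - Hf p N x) :=
    (intervalIntegral.integral_add_adjacent_intervals hD1 hD2).symm
  -- region 1
  have hNp : (N:ℝ)^(p-1) * (N:ℝ) = (N:ℝ)^p := by
    nth_rewrite 2 [← Real.rpow_one (N:ℝ)]
    rw [← Real.rpow_add hN0]
    norm_num
  have hreg1 : (∫ x in (0:ℝ)..a, (Gf p N x - Hf p N x))
      ≤ ∫ x in (0:ℝ)..a, (p*π^3/2*(N:ℝ)^p) * x^2 := by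
    apply intervalIntegral.integral_mono_on ha0.le hD1
      ((continuous_const.mul (continuous_pow 2)).intervalIntegrable _ _)
    intro x hx
    rcases eq_or_lt_of_le hx.1 with h0 | h0
    · rw [← h0, Gf_zero p hp0, Hf_zero p hp0]
      norm_num
    · have hx1 : x < 1 := by
        have := hx.2; linarith
      have hM : |Real.sin (N * π * x)| ≤ (N:ℝ)*π*x := by
        have h1 : |Real.sin ((N:ℝ) * π * x)| ≤ |(N:ℝ)*π*x| := Real.abs_sin_le_abs
        rwa [abs_of_nonneg (mul_nonneg (by positivity) h0.le)] at h1
      have key := diff_bound hp1 h0 (by linarith [hx.2, ha2]) (ratio_le_N h0 hx1) hM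
      calc Gf p N x - Hf p N x ≤ p * (N:ℝ) ^ (p-1) * (((N:ℝ)*π*x) * (π^2/2 * x)) := key
        _ = (p*π^3/2*(N:ℝ)^p) * x^2 := by linear_combination (p*π^3/2*x^2) * hNp
  have hval1 : ∫ x in (0:ℝ)..a, (p*π^3/2*(N:ℝ)^p) * x^2
      = (p*π^3/2*(N:ℝ)^p) * (a^3/3) := by
    rw [intervalIntegral.integral_const_mul, integral_pow]
    norm_num
  have hNc : (N:ℝ)^p = (N:ℝ)^(p-3) * ((N:ℝ))^(3:ℕ) := by
    rw [← Real.rpow_natCast (N:ℝ) 3, ← Real.rpow_add hN0]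
    norm_num
  have hval1' : (p*π^3/2*(N:ℝ)^p) * (a^3/3) = (p/6) * (N:ℝ)^(p-3) := by
    rw [hadef, hNc]
    have hNne : (N:ℝ) ≠ 0 := hN0.ne'
    field_simp
    ring
  have hreg1' : (∫ x in (0:ℝ)..a, (Gf p N x - Hf p N x)) ≤ (p/6) * maxE p N := by
    have h := hreg1
    rw [hval1, hval1'] at h
    exact h.trans (mul_le_mul_of_nonneg_left (rpow_le_maxE p N) (by positivity))
  -- region 2
  have hreg2 : (∫ x in a..(1/2:ℝ), (Gf p N x - Hf p N x))
      ≤ ∫ x in a..(1/2:ℝ), c2 * x^(2-p) := by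
    apply intervalIntegral.integral_mono_on ha2 hD2
    · apply ContinuousOn.intervalIntegrable
      apply continuousOn_const.mul
      apply ContinuousOn.rpow_const continuousOn_id
      intro x hx
      rw [Set.uIcc_of_le ha2] at hx
      exact Or.inl (ne_of_gt (lt_of_lt_of_le ha0 hx.1))
    · intro x hx
      have hx0 : 0 < x := lt_of_lt_of_le ha0 hx.1
      have hx2 : x ≤ 1/2 := hx.2
      have hx1 : x < 1 := by linarith
      have hsge : 2*x ≤ Real.sin (π * x) := by
        have := Real.mul_le_sin (x := π * x) (by positivity) (by nlinarith)
        calc 2*x = 2/π * (π*x) := by field_simp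
          _ ≤ Real.sin (π * x) := this
      have hA : |Real.sin (N * π * x)| / Real.sin (π * x) ≤ (2*x)⁻¹ := by
        rw [← one_div]
        exact div_le_div₀ (by norm_num) (Real.abs_sin_le_one _) (by positivity) hsge
      have key := diff_bound hp1 hx0 hx2 hA (Real.abs_sin_le_one _)
      have heq : p * ((2*x)⁻¹) ^ (p-1) * (1 * (π^2/2 * x)) = c2 * x^(2-p) := by
        rw [Real.inv_rpow (by positivity), ← Real.rpow_neg (by positivity),
          show -(p-1) = 1-p by ring, Real.mul_rpow two_pos.le hx0.le, hc2,
          show (2:ℝ)-p = (1-p)+1 by ring, Real.rpow_add hx0, Real.rpow_one]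
        ring
      rw [← heq]
      exact key
  have hreg2' : (∫ x in a..(1/2:ℝ), (Gf p N x - Hf p N x)) ≤ c2 * (D * maxE p N) := by
    calc (∫ x in a..(1/2:ℝ), (Gf p N x - Hf p N x)) ≤ ∫ x in a..(1/2:ℝ), c2 * x^(2-p) := hreg2
      _ = c2 * ∫ x in a..(1/2:ℝ), x^(2-p) := intervalIntegral.integral_const_mul _ _
      _ ≤ c2 * (D * maxE p N) := mul_le_mul_of_nonneg_left (hDbd N hN) hc2pos.le
  rw [hsplit]
  calc _ ≤ (p/6) * maxE p N + c2 * (D * maxE p N) := add_le_add hreg1' hreg2'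
    _ = (p/6 + c2 * D) * maxE p N := by ring

theorem stmt_4 (p : ℝ) (hp : 1 < p) :
    ∃ C > 0, ∀ N : ℕ, 2 ≤ N →
      |(∫ x in (0:ℝ)..1,
          (‖∑ ν ∈ Finset.range N, Complex.exp (2 * Real.pi * Complex.I * ν * x)‖) ^ p)
        - ((2 / Real.pi) * ∫ u in Set.Ioi (0:ℝ), |Real.sin u / u| ^ p) * (N : ℝ) ^ (p - 1)|
      ≤ C * max (max ((N : ℝ) ^ (p - 3)) (Real.log N)) 1 := by
  have hπ := Real.pi_pos
  have hp1 : (1:ℝ) ≤ p := hp.le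
  have hp0 : p ≠ 0 := by linarith
  obtain ⟨C1, hC1, hC1bd⟩ := E1_bound hp
  set Ct : ℝ := 2*π⁻¹*(π/2)^(1-p)/(p-1) with hCt
  have hCtpos : 0 < Ct := by
    have := Real.rpow_pos_of_pos (show (0:ℝ) < π/2 by positivity) (1-p)
    have hp1' : (0:ℝ) < p - 1 := by linarith
    positivity
  refine ⟨2*C1 + Ct, by positivity, fun N hN => ?_⟩
  have hN0 : (0:ℝ) < N := by exact_mod_cast Nat.lt_of_lt_of_le two_pos hN
  have hN1 : 1 ≤ N := le_trans one_le_two hN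
  -- step 1 : replace integrand by Gf
  have hstep1 : (∫ x in (0:ℝ)..1,
      (‖∑ ν ∈ Finset.range N, Complex.exp (2 * Real.pi * Complex.I * ν * x)‖) ^ p)
      = ∫ x in (0:ℝ)..1, Gf p N x := by
    apply intervalIntegral.integral_congr_ae
    have h1 : ∀ᵐ x : ℝ, x ≠ 1 := by
      rw [MeasureTheory.ae_iff]
      have : {x : ℝ | ¬ x ≠ 1} = {1} := by ext y; simp
      rw [this]
      exact Real.volume_singleton
    filter_upwards [h1] with x hx hmem
    rw [Set.uIoc_of_le (by norm_num : (0:ℝ) ≤ 1)] at hmem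
    have hx1 : x < 1 := lt_of_le_of_ne hmem.2 hx
    rw [kernel_abs N x hmem.1 hx1]
    rfl
  -- integrability of Gf and Hf on pieces
  have hGhalf : IntervalIntegrable (Gf p N) volume 0 (1/2) :=
    (intervalIntegrable_iff_integrableOn_Ioc_of_le (by norm_num)).2
      ((integrableOn_Gf hp1 N).mono_set (Ioc_subset_Ioc le_rfl (by norm_num)))
  have hGhalf2 : IntervalIntegrable (Gf p N) volume (1/2) 1 :=
    (intervalIntegrable_iff_integrableOn_Ioc_of_le (by norm_num)).2
      ((integrableOn_Gf hp1 N).mono_set (Ioc_subset_Ioc (by norm_num) le_rfl))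
  have hHhalf : IntervalIntegrable (Hf p N) volume 0 (1/2) :=
    (intervalIntegrable_iff_integrableOn_Ioc_of_le (by norm_num)).2
      ((integrableOn_Hf hp1 N).mono_set (Ioc_subset_Ioc le_rfl (by norm_num)))
  -- step 2 : symmetry
  have hstep2 : ∫ x in (0:ℝ)..1, Gf p N x = 2 * ∫ x in (0:ℝ)..(1/2:ℝ), Gf p N x := by
    rw [← intervalIntegral.integral_add_adjacent_intervals hGhalf hGhalf2]
    have hs : ∫ x in (0:ℝ)..(1/2:ℝ), Gf p N (1 - x) = ∫ x in (1/2:ℝ)..1, Gf p N x := by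
      have := intervalIntegral.integral_comp_sub_left (a := (0:ℝ)) (b := (1/2:ℝ)) (Gf p N) 1
      norm_num at this
      convert this using 2 <;> norm_num
    rw [← hs, intervalIntegral.integral_congr (fun x _ => Gf_symm p N x)]
    ring
  set A : ℝ := ∫ x in (0:ℝ)..(1/2:ℝ), Gf p N x with hA
  set B : ℝ := ∫ x in (0:ℝ)..(1/2:ℝ), Hf p N x with hB
  -- step 3 : A - B controlled
  have hAB : A - B = ∫ x in (0:ℝ)..(1/2:ℝ), (Gf p N x - Hf p N x) :=
    (intervalIntegral.integral_sub hGhalf hHhalf).symm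
  have hABnonneg : 0 ≤ A - B := by
    rw [hAB]
    apply intervalIntegral.integral_nonneg (by norm_num)
    intro x hx
    rcases eq_or_lt_of_le hx.1 with h0 | h0
    · rw [← h0, Gf_zero p hp0, Hf_zero p hp0]; norm_num
    · have : x < 1 := by have := hx.2; linarith
      linarith [Hf_le_Gf (N := N) (by linarith : (0:ℝ) ≤ p) h0 this]
  have hABle : A - B ≤ C1 * maxE p N := by rw [hAB]; exact hC1bd N hN
  -- step 4 : B in terms of phiP
  set T : ℝ := (N:ℝ)*π/2 with hT
  have hT0 : 0 < T := by positivity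
  have hBeq : B = (N:ℝ)^(p-1) * π⁻¹ * ∫ u in (0:ℝ)..T, phiP p u := Hf_integral_eq hp hN1
  set δ : ℝ := ∫ u in Ioi (0:ℝ), phiP p u with hδ
  set tail : ℝ := ∫ u in Ioi T, phiP p u with htail
  have hIT : (∫ u in (0:ℝ)..T, phiP p u) = δ - tail := by
    rw [intervalIntegral.integral_of_le hT0.le]
    have := tail_split hp hT0
    linarith [this]
  -- tail bound after scaling
  have hNp1 : (0:ℝ) < (N:ℝ)^(p-1) := Real.rpow_pos_of_pos hN0 _
  have hscale : (N:ℝ)^(p-1) * T^(1-p) = (π/2)^(1-p) := by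
    rw [hT, show (N:ℝ)*π/2 = (N:ℝ)*(π/2) by ring,
      Real.mul_rpow hN0.le (by positivity : (0:ℝ) ≤ π/2), ← mul_assoc,
      ← Real.rpow_add hN0]
    norm_num
  have htailbd : 2 * ((N:ℝ)^(p-1) * π⁻¹ * tail) ≤ Ct := by
    have h1 : tail ≤ T^(1-p)/(p-1) := tail_le hp hT0
    have h2 : 2 * ((N:ℝ)^(p-1) * π⁻¹ * tail) ≤ 2 * ((N:ℝ)^(p-1) * π⁻¹ * (T^(1-p)/(p-1))) := by
      have hc : (0:ℝ) < (N:ℝ)^(p-1) * π⁻¹ := by positivity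
      nlinarith
    have h3 : 2 * ((N:ℝ)^(p-1) * π⁻¹ * (T^(1-p)/(p-1))) = Ct := by
      rw [hCt]
      have : (N:ℝ)^(p-1) * (T^(1-p)/(p-1)) = (N:ℝ)^(p-1) * T^(1-p)/(p-1) := by ring
      rw [mul_comm ((N:ℝ)^(p-1)) π⁻¹, mul_assoc, this, hscale]
      ring
    linarith
  have htail0 : 0 ≤ tail := tail_nonneg
  -- assemble
  have hmain : (∫ x in (0:ℝ)..1,
      (‖∑ ν ∈ Finset.range N, Complex.exp (2 * Real.pi * Complex.I * ν * x)‖) ^ p)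
        - ((2 / Real.pi) * δ) * (N : ℝ) ^ (p - 1)
      = 2*(A - B) + (-(2 * ((N:ℝ)^(p-1) * π⁻¹ * tail))) := by
    rw [hstep1, hstep2]
    have hBval : B = (N:ℝ)^(p-1) * π⁻¹ * (δ - tail) := by rw [hBeq, hIT]
    rw [hBval]
    field_simp
    ring
  have habs : |(∫ x in (0:ℝ)..1,
      (‖∑ ν ∈ Finset.range N, Complex.exp (2 * Real.pi * Complex.I * ν * x)‖) ^ p)
        - ((2 / Real.pi) * δ) * (N : ℝ) ^ (p - 1)|
      ≤ 2*(C1 * maxE p N) + Ct := by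
    rw [hmain]
    calc |2*(A-B) + (-(2 * ((N:ℝ)^(p-1) * π⁻¹ * tail)))|
        ≤ |2*(A-B)| + |(-(2 * ((N:ℝ)^(p-1) * π⁻¹ * tail)))| := abs_add_le _ _
      _ = 2*(A-B) + 2 * ((N:ℝ)^(p-1) * π⁻¹ * tail) := by
          rw [abs_neg, abs_of_nonneg (by linarith), abs_of_nonneg (by positivity)]
      _ ≤ 2*(C1 * maxE p N) + Ct := by
          have := htailbd
          linarith
  have hfinal : 2*(C1 * maxE p N) + Ct ≤ (2*C1 + Ct) * maxE p N := by
    have h1 : (1:ℝ) ≤ maxE p N := le_max_right _ _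
    nlinarith
  calc _ ≤ 2*(C1 * maxE p N) + Ct := habs
    _ ≤ (2*C1 + Ct) * maxE p N := hfinal
    _ = (2*C1 + Ct) * max (max ((N : ℝ) ^ (p - 3)) (Real.log N)) 1 := rfl
end

section
/- For all real ξ, all integers N ≥ 1, all x ∈ R, and all ω ∈ (0,1), ∫_0^1 |f_θ(x)|² dθ ≥ (sin(πω)/π)² |D_N(x−ξ)|², where f_θ(x) := ∑_{n∈S_θ} e(nx) and S_θ := {n : 1 ≤ n ≤ N, ‖nξ − θ‖ ≤ ω/2} (‖·‖ denoting distance to the nearest integer). -/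
open Real MeasureTheory

/-- The Dirichlet kernel `D_N(y) = ∑_{ν=0}^{N-1} e(νy)` with `e(y) = exp(2πiy)`. -/
noncomputable def Dker (N : ℕ) (y : ℝ) : ℂ :=
  ∑ ν ∈ Finset.range N, Complex.exp (2 * Real.pi * Complex.I * ν * y)


open intervalIntegral

noncomputable abbrev cc : ℂ := -(2 * Real.pi * Complex.I)

-- integrability helper: indicator of Icc times exp
lemma intInt_ind (l r : ℝ) (u v : ℝ) :
    IntervalIntegrable (fun θ : ℝ => if θ ∈ Set.Icc l r then Complex.exp (cc * θ) else 0)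
      volume u v := by
  have hc : Continuous fun θ : ℝ => Complex.exp (cc * θ) := by
    exact Complex.continuous_exp.comp (by continuity)
  have h1 : IntervalIntegrable (fun θ : ℝ => Complex.exp (cc * θ)) volume u v :=
    hc.intervalIntegrable u v
  rw [intervalIntegrable_iff] at h1 ⊢
  have : (fun θ : ℝ => if θ ∈ Set.Icc l r then Complex.exp (cc * θ) else 0)
      = Set.indicator (Set.Icc l r) (fun θ : ℝ => Complex.exp (cc * θ)) := by
    ext θ; simp [Set.indicator_apply]
  rw [this]
  exact h1.indicator measurableSet_Icc

lemma key (a ω : ℝ) (hω0 : 0 < ω) (hω1 : ω < 1) :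
    (∫ θ in (0:ℝ)..1, if |a - θ - round (a - θ)| ≤ ω / 2
        then Complex.exp (cc * θ) else 0)
      = Complex.exp (cc * a) * ((Real.sin (Real.pi * ω) / Real.pi : ℝ) : ℂ) := by
  set f : ℝ → ℂ := fun θ => if |a - θ - round (a - θ)| ≤ ω / 2 then Complex.exp (cc * θ) else 0
    with hf
  have hper : Function.Periodic f 1 := by
    intro θ
    have h1 : a - (θ + 1) = a - θ - (1 : ℤ) := by push_cast; ring
    have h2 : round (a - (θ + 1)) = round (a - θ) - 1 := by
      rw [h1, round_sub_intCast]
    have h3 : Complex.exp (cc * (θ + 1)) = Complex.exp (cc * θ) := by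
      rw [show (cc : ℂ) * (↑θ + 1) = cc * θ + -(2 * Real.pi * Complex.I) by push_cast; ring,
        Complex.exp_add, Complex.exp_neg, Complex.exp_two_pi_mul_I]
      simp
    simp only [hf]
    rw [Complex.ofReal_add, Complex.ofReal_one, h3]
    congr 2
    rw [h2]
    push_cast
    ring_nf
  have hshift : (∫ θ in (0:ℝ)..1, f θ) = ∫ θ in (a - 1/2)..(a - 1/2 + 1), f θ := by
    have := hper.intervalIntegral_add_eq 0 (a - 1/2)
    simpa using this
  have heq : Set.EqOn f
      (fun θ => if θ ∈ Set.Icc (a - ω/2) (a + ω/2) then Complex.exp (cc * θ) else 0)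
      (Set.uIcc (a - 1/2) (a - 1/2 + 1)) := by
    intro θ hθ
    rw [Set.uIcc_of_le (by linarith)] at hθ
    obtain ⟨h1, h2⟩ := hθ
    simp only [hf, Set.mem_Icc]
    by_cases hr : a - θ ∈ Set.Ico (-(1/2) : ℝ) (1/2)
    · have h0 : round (a - θ) = 0 := round_eq_zero_iff.2 hr
      rw [h0]
      congr 1
      simp only [Int.cast_zero, sub_zero, eq_iff_iff, abs_le]
      constructor <;> intro h <;> constructor <;> linarith [h.1, h.2]
    · have h12 : a - θ = 1/2 := by
        simp only [Set.mem_Ico, not_and_or, not_le, not_lt] at hr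
        rcases hr with h | h
        · linarith
        · linarith
      have hro : round (a - θ) = 1 := by rw [h12]; norm_num [round_eq]
      have hna : ¬ |a - θ - (round (a - θ) : ℝ)| ≤ ω / 2 := by
        rw [hro, h12]
        push_cast
        rw [not_le, show (1:ℝ)/2 - 1 = -(1/2) by norm_num, abs_neg, abs_of_pos (by norm_num)]
        linarith
      have hnb : ¬ (a - ω/2 ≤ θ ∧ θ ≤ a + ω/2) := by
        intro ⟨hh, _⟩; linarith
      rw [if_neg hna, if_neg hnb]
  have hcongr : (∫ θ in (a - 1/2)..(a - 1/2 + 1), f θ)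
      = ∫ θ in (a - 1/2)..(a - 1/2 + 1),
          (if θ ∈ Set.Icc (a - ω/2) (a + ω/2) then Complex.exp (cc * θ) else 0) := by
    exact intervalIntegral.integral_congr heq
  have hind : (∫ θ in (a - 1/2)..(a - 1/2 + 1),
      (if θ ∈ Set.Icc (a - ω/2) (a + ω/2) then Complex.exp (cc * θ) else 0))
      = ∫ θ in (a - ω/2)..(a + ω/2), Complex.exp (cc * θ) := by
    rw [intervalIntegral.integral_of_le (by linarith), intervalIntegral.integral_of_le (by linarith)]
    have hrw : ∀ θ : ℝ, (if θ ∈ Set.Icc (a - ω/2) (a + ω/2) then Complex.exp (cc * θ) else 0)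
        = Set.indicator (Set.Icc (a - ω/2) (a + ω/2)) (fun θ : ℝ => Complex.exp (cc * θ)) θ := by
      intro θ; simp [Set.indicator_apply]
    simp only [hrw]
    rw [MeasureTheory.setIntegral_indicator measurableSet_Icc]
    have hsub : Set.Ioc (a - 1/2) (a - 1/2 + 1) ∩ Set.Icc (a - ω/2) (a + ω/2)
        = Set.Icc (a - ω/2) (a + ω/2) := by
      apply Set.inter_eq_self_of_subset_right
      intro θ hθ
      obtain ⟨h1, h2⟩ := hθ
      constructor <;> [linarith; linarith]
    rw [hsub, MeasureTheory.integral_Icc_eq_integral_Ioc]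
  have hc0 : (cc : ℂ) ≠ 0 := by
    simp only [cc, neg_ne_zero]
    intro h
    have := Real.pi_ne_zero
    simpa [Complex.ext_iff, Real.pi_ne_zero, Complex.I_ne_zero] using h
  have hval : (∫ θ in (a - ω/2)..(a + ω/2), Complex.exp (cc * θ))
      = Complex.exp (cc * a) * ((Real.sin (Real.pi * ω) / Real.pi : ℝ) : ℂ) := by
    rw [integral_exp_mul_complex hc0]
    have e1 : (cc : ℂ) * ↑(a + ω/2) = cc * a + -((Real.pi * ω) * Complex.I) := by
      simp only [cc]; push_cast; ring
    have e2 : (cc : ℂ) * ↑(a - ω/2) = cc * a + (Real.pi * ω) * Complex.I := by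
      simp only [cc]; push_cast; ring
    rw [e1, e2, Complex.exp_add, Complex.exp_add]
    rw [Complex.ofReal_div, Complex.ofReal_sin, Complex.sin, Complex.ofReal_mul]
    simp only [cc]
    have hπ : (Real.pi : ℂ) ≠ 0 := by exact_mod_cast Complex.ofReal_ne_zero.2 Real.pi_ne_zero
    field_simp
    ring_nf
    simp [Complex.I_sq]
  rw [hshift, hcongr, hind, hval]

lemma abs_exp_I (r : ℝ) (z : ℂ) (h : z = (r : ℂ) * Complex.I) :
    ‖Complex.exp z‖ = 1 := by
  rw [h, Complex.norm_exp_ofReal_mul_I]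

theorem stmt_12 (ξ : ℝ) (N : ℕ) (hN : 1 ≤ N) (x : ℝ) (ω : ℝ) (hω : ω ∈ Set.Ioo 0 1) :
    (Real.sin (Real.pi * ω) / Real.pi) ^ 2 * ‖Dker N (x - ξ)‖ ^ 2 ≤
      ∫ θ in (0:ℝ)..1,
        (‖∑ n ∈ (Finset.Icc 1 N).filter
            (fun n : ℕ => |(n : ℝ) * ξ - θ - round ((n : ℝ) * ξ - θ)| ≤ ω / 2),
          Complex.exp (2 * Real.pi * Complex.I * n * x)‖) ^ 2 := by
  obtain ⟨hω0, hω1⟩ := hω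
  set g : ℝ → ℂ := fun θ => ∑ n ∈ (Finset.Icc 1 N).filter
      (fun n : ℕ => |(n : ℝ) * ξ - θ - round ((n : ℝ) * ξ - θ)| ≤ ω / 2),
      Complex.exp (2 * Real.pi * Complex.I * n * x) with hg
  -- measurability of the condition sets
  have hmeas : ∀ n : ℕ, MeasurableSet
      {θ : ℝ | |(n : ℝ) * ξ - θ - round ((n : ℝ) * ξ - θ)| ≤ ω / 2} := by
    intro n
    have hm : Measurable fun θ : ℝ =>
        |(n : ℝ) * ξ - θ - (round ((n : ℝ) * ξ - θ) : ℝ)| := by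
      apply Measurable.abs
      apply Measurable.sub
      · exact (measurable_const.sub measurable_id)
      · have : Measurable fun θ : ℝ => (round ((n : ℝ) * ξ - θ) : ℤ) := by
          simp only [round_eq]
          exact Int.measurable_floor.comp ((measurable_const.sub measurable_id).add_const _)
        exact (measurable_from_top (f := (Int.cast : ℤ → ℝ))).comp this
    exact hm (measurableSet_Iic (a := ω / 2))
  -- rewrite g θ as a sum of ite's
  have hgθ : ∀ θ : ℝ, g θ = ∑ n ∈ Finset.Icc 1 N,
      if |(n : ℝ) * ξ - θ - round ((n : ℝ) * ξ - θ)| ≤ ω / 2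
      then Complex.exp (2 * Real.pi * Complex.I * n * x) else 0 := by
    intro θ; rw [hg]; exact Finset.sum_filter _ _
  -- integrability of each indicator·exp
  have hintn : ∀ n : ℕ, IntervalIntegrable (fun θ : ℝ =>
      if |(n : ℝ) * ξ - θ - round ((n : ℝ) * ξ - θ)| ≤ ω / 2
      then Complex.exp (cc * θ) else 0) volume 0 1 := by
    intro n
    rw [intervalIntegrable_iff]
    have hc : Continuous fun θ : ℝ => Complex.exp (cc * θ) :=
      Complex.continuous_exp.comp (by continuity)
    have h1 : IntegrableOn (fun θ : ℝ => Complex.exp (cc * θ)) (Set.uIoc 0 1) volume :=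
      (hc.intervalIntegrable 0 1).def'
    have : (fun θ : ℝ => if |(n : ℝ) * ξ - θ - round ((n : ℝ) * ξ - θ)| ≤ ω / 2
        then Complex.exp (cc * θ) else 0)
        = Set.indicator {θ : ℝ | |(n : ℝ) * ξ - θ - round ((n : ℝ) * ξ - θ)| ≤ ω / 2}
            (fun θ : ℝ => Complex.exp (cc * θ)) := by
      ext θ; simp [Set.indicator_apply]
    rw [this]
    exact h1.indicator (hmeas n)
  -- integrability of g
  have hgint : IntervalIntegrable g volume 0 1 := by
    have hterm : ∀ n ∈ Finset.Icc 1 N, IntervalIntegrable (fun θ : ℝ =>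
        if |(n : ℝ) * ξ - θ - round ((n : ℝ) * ξ - θ)| ≤ ω / 2
        then Complex.exp (2 * Real.pi * Complex.I * n * x) else 0) volume 0 1 := by
      intro n _
      rw [intervalIntegrable_iff]
      have h1 : IntegrableOn (fun _ : ℝ => Complex.exp (2 * Real.pi * Complex.I * n * x))
          (Set.uIoc 0 1) volume := by
        refine integrableOn_const ?_ ?_
        · rw [Set.uIoc_of_le (by norm_num : (0:ℝ) ≤ 1)]; exact measure_Ioc_lt_top.ne
        · exact enorm_ne_top
      have : (fun θ : ℝ => if |(n : ℝ) * ξ - θ - round ((n : ℝ) * ξ - θ)| ≤ ω / 2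
          then Complex.exp (2 * Real.pi * Complex.I * n * x) else 0)
          = Set.indicator {θ : ℝ | |(n : ℝ) * ξ - θ - round ((n : ℝ) * ξ - θ)| ≤ ω / 2}
              (fun _ : ℝ => Complex.exp (2 * Real.pi * Complex.I * n * x)) := by
        ext θ; simp [Set.indicator_apply]
      rw [this]
      exact h1.indicator (hmeas n)
    have hsum := IntervalIntegrable.sum (Finset.Icc 1 N) hterm
    have hgeq : g = (∑ n ∈ Finset.Icc 1 N, fun θ : ℝ =>
        if |(n : ℝ) * ξ - θ - round ((n : ℝ) * ξ - θ)| ≤ ω / 2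
        then Complex.exp (2 * Real.pi * Complex.I * n * x) else 0) := by
      funext θ; rw [hgθ θ, Finset.sum_apply]
    rw [hgeq]; exact hsum
  -- compute A
  set A : ℂ := ∫ θ in (0:ℝ)..1, g θ * Complex.exp (cc * θ) with hA
  have hAval : A = ((Real.sin (Real.pi * ω) / Real.pi : ℝ) : ℂ)
      * ∑ n ∈ Finset.Icc 1 N,
          Complex.exp (2 * Real.pi * Complex.I * n * ((x : ℂ) - (ξ : ℂ))) := by
    have h1 : ∀ θ : ℝ, g θ * Complex.exp (cc * θ)
        = ∑ n ∈ Finset.Icc 1 N,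
            (if |(n : ℝ) * ξ - θ - round ((n : ℝ) * ξ - θ)| ≤ ω / 2
             then Complex.exp (2 * Real.pi * Complex.I * n * x) * Complex.exp (cc * θ)
             else 0) := by
      intro θ
      rw [hgθ θ, Finset.sum_mul]
      exact Finset.sum_congr rfl fun n _ => by rw [ite_mul, zero_mul]
    rw [hA]
    simp only [h1]
    rw [intervalIntegral.integral_finset_sum]
    · have h2 : ∀ n ∈ Finset.Icc 1 N,
          (∫ θ in (0:ℝ)..1,
            (if |(n : ℝ) * ξ - θ - round ((n : ℝ) * ξ - θ)| ≤ ω / 2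
             then Complex.exp (2 * Real.pi * Complex.I * n * x) * Complex.exp (cc * θ)
             else 0))
          = ((Real.sin (Real.pi * ω) / Real.pi : ℝ) : ℂ)
            * Complex.exp (2 * Real.pi * Complex.I * n * ((x : ℂ) - (ξ : ℂ))) := by
        intro n _
        have h3 : (fun θ : ℝ =>
            (if |(n : ℝ) * ξ - θ - round ((n : ℝ) * ξ - θ)| ≤ ω / 2
             then Complex.exp (2 * Real.pi * Complex.I * n * x) * Complex.exp (cc * θ)
             else 0))
            = fun θ : ℝ => Complex.exp (2 * Real.pi * Complex.I * n * x) *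
              (if |(n : ℝ) * ξ - θ - round ((n : ℝ) * ξ - θ)| ≤ ω / 2
               then Complex.exp (cc * θ) else 0) := by
          funext θ; rw [mul_ite, mul_zero]
        rw [h3, intervalIntegral.integral_const_mul, key ((n : ℝ) * ξ) ω hω0 hω1,
          ← mul_assoc, ← Complex.exp_add]
        rw [mul_comm]
        congr 2
        push_cast
        ring
      rw [Finset.sum_congr rfl h2, ← Finset.mul_sum]
    · intro n _
      have := (hintn n).const_mul (Complex.exp (2 * Real.pi * Complex.I * n * x))
      simpa only [mul_ite, mul_zero] using this
  -- relate the sum to the Dirichlet kernel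
  have hT : (∑ n ∈ Finset.Icc 1 N,
        Complex.exp (2 * Real.pi * Complex.I * n * ((x : ℂ) - (ξ : ℂ))))
      = Complex.exp (2 * Real.pi * Complex.I * ((x : ℂ) - (ξ : ℂ))) * Dker N (x - ξ) := by
    rw [show Finset.Icc 1 N = Finset.Ico 1 (N + 1) from (Finset.Ico_add_one_right_eq_Icc 1 N).symm,
      Finset.sum_Ico_eq_sum_range]
    simp only [Nat.add_sub_cancel]
    rw [Dker, Finset.mul_sum]
    refine Finset.sum_congr rfl fun ν _ => ?_
    rw [← Complex.exp_add]
    congr 1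
    push_cast
    ring
  -- |A| = (sin(πω)/π) |D|
  have hsin : 0 ≤ Real.sin (Real.pi * ω) / Real.pi := by
    apply div_nonneg _ Real.pi_pos.le
    apply Real.sin_nonneg_of_nonneg_of_le_pi
    · positivity
    · nlinarith [Real.pi_pos]
  have hAabs : ‖A‖ = (Real.sin (Real.pi * ω) / Real.pi)
      * ‖Dker N (x - ξ)‖ := by
    rw [hAval, hT, norm_mul, norm_mul, Complex.norm_real, Real.norm_eq_abs, abs_of_nonneg hsin,
      abs_exp_I (2 * Real.pi * (x - ξ)) _ (by push_cast; ring), one_mul]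
  -- |A| ≤ ∫ ‖g‖
  have hnorm1 : ∀ θ : ℝ, ‖g θ * Complex.exp (cc * θ)‖ = ‖g θ‖ := by
    intro θ
    rw [norm_mul,
      abs_exp_I (-(2 * Real.pi * θ)) _ (by push_cast; ring), mul_one]
  have hbound : ‖A‖ ≤ ∫ θ in (0:ℝ)..1, ‖g θ‖ := by
    calc ‖A‖ ≤ ∫ θ in (0:ℝ)..1, ‖g θ * Complex.exp (cc * θ)‖ :=
          intervalIntegral.norm_integral_le_integral_norm (by norm_num)
      _ = ∫ θ in (0:ℝ)..1, ‖g θ‖ := by simp only [hnorm1]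
  -- Cauchy–Schwarz / variance
  have hGint : IntervalIntegrable (fun θ => ‖g θ‖) volume 0 1 := hgint.norm
  have hbnd : ∀ θ : ℝ, ‖g θ‖ ≤ N := by
    intro θ
    calc ‖g θ‖ ≤ ∑ n ∈ (Finset.Icc 1 N).filter
          (fun n : ℕ => |(n : ℝ) * ξ - θ - round ((n : ℝ) * ξ - θ)| ≤ ω / 2),
          ‖Complex.exp (2 * Real.pi * Complex.I * n * x)‖ := norm_sum_le _ _
      _ = ∑ n ∈ (Finset.Icc 1 N).filter
          (fun n : ℕ => |(n : ℝ) * ξ - θ - round ((n : ℝ) * ξ - θ)| ≤ ω / 2), 1 := by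
          refine Finset.sum_congr rfl fun n _ => ?_
          rw [abs_exp_I (2 * Real.pi * n * x) _ (by push_cast; ring)]
      _ ≤ ∑ n ∈ Finset.Icc 1 N, (1:ℝ) := by
          apply Finset.sum_le_sum_of_subset_of_nonneg (Finset.filter_subset _ _)
          intros; norm_num
      _ ≤ N := by simp
  have hG2int : IntervalIntegrable (fun θ => ‖g θ‖ ^ 2) volume 0 1 := by
    rw [intervalIntegrable_iff] at hGint ⊢
    have := Integrable.bdd_mul hGint hGint.aestronglyMeasurable
        (c := N) (Filter.Eventually.of_forall fun θ => by simpa using hbnd θ)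
    simpa [pow_two, IntegrableOn] using this
  set I1 : ℝ := ∫ θ in (0:ℝ)..1, ‖g θ‖ with hI1
  have hCS : I1 ^ 2 ≤ ∫ θ in (0:ℝ)..1, ‖g θ‖ ^ 2 := by
    have hnn : (0:ℝ) ≤ ∫ θ in (0:ℝ)..1, (‖g θ‖ - I1) ^ 2 :=
      intervalIntegral.integral_nonneg (by norm_num) (fun θ _ => sq_nonneg _)
    have hexp : (fun θ : ℝ => (‖g θ‖ - I1) ^ 2)
        = fun θ : ℝ => (‖g θ‖ ^ 2 - 2 * I1 * ‖g θ‖) + I1 ^ 2 := by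
      funext θ; ring
    rw [hexp, intervalIntegral.integral_add (hG2int.sub (hGint.const_mul _))
        intervalIntegrable_const,
      intervalIntegral.integral_sub hG2int (hGint.const_mul _),
      intervalIntegral.integral_const_mul, intervalIntegral.integral_const] at hnn
    rw [← hI1] at hnn
    simp only [sub_zero, one_smul, smul_eq_mul] at hnn
    nlinarith [hnn]
  -- put everything together
  have hfin : (Real.sin (Real.pi * ω) / Real.pi) ^ 2 * ‖Dker N (x - ξ)‖ ^ 2
      ≤ ∫ θ in (0:ℝ)..1, ‖g θ‖ ^ 2 := by
    have h1 : (Real.sin (Real.pi * ω) / Real.pi) ^ 2 * ‖Dker N (x - ξ)‖ ^ 2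
        = (‖A‖) ^ 2 := by rw [hAabs]; ring
    have h2 : (‖A‖) ^ 2 ≤ I1 ^ 2 := by
      apply pow_le_pow_left₀ (norm_nonneg A) hbound
    linarith
  calc (Real.sin (Real.pi * ω) / Real.pi) ^ 2 * ‖Dker N (x - ξ)‖ ^ 2
      ≤ ∫ θ in (0:ℝ)..1, ‖g θ‖ ^ 2 := hfin
    _ = _ := by simp only [hg]
end
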